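/- Let D be a squarefree positive integer with D ≠ 1, and let O be the ring of integers of ℚ(√−D). For d a positive integer with d ∉ {1, 3}, there is no unit η ∈ O with η⁴ + η² + 1 ≡ 0 (mod d·O), and consequently (when D ≠ 3) there are no nontrivial geometric-progression triples (α, αβ, αβ²), α ≠ 0, in O satisfying x² + y² + z² = d·xyz beyond those with rational integer coordinates, i.e., there are none at all. -/

import Mathlib

open Polynomial NumberField

/-- If `D` is squarefree and `D * x^2 = k` for a rational `x`, then `D ∣ k`. -/
lemma aux_sq_dvd (D : ℕ) (hD : Squarefree D) (x : ℚ) (k : ℕ)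
    (h : (D : ℚ) * x ^ 2 = (k : ℚ)) : (D : ℤ) ∣ (k : ℤ) := by
  have hden : (0 : ℤ) < (x.den : ℤ) := by exact_mod_cast x.pos
  have key : (D : ℤ) * x.num ^ 2 = (k : ℤ) * (x.den : ℤ) ^ 2 := by
    have hx : (x.num : ℚ) = x * (x.den : ℚ) := (Rat.mul_den_eq_num x).symm
    have h2 : (D : ℚ) * (x.num : ℚ) ^ 2 = (k : ℚ) * (x.den : ℚ) ^ 2 := by
      rw [hx]; nlinarith [h]
    exact_mod_cast h2
  have hcop : IsCoprime ((x.den : ℤ)) x.num := by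
    rw [Int.isCoprime_iff_gcd_eq_one]
    simpa [Int.gcd, Nat.coprime_comm] using x.reduced
  have hdvd : ((x.den : ℤ)) ^ 2 ∣ (D : ℤ) * x.num ^ 2 := ⟨(k : ℤ), by linarith [key]⟩
  have hdvdD : ((x.den : ℤ)) ^ 2 ∣ (D : ℤ) :=
    (IsCoprime.pow hcop).dvd_of_dvd_mul_right hdvd
  have hsqf : Squarefree ((D : ℤ)) := Int.squarefree_natCast.mpr hD
  have hu : IsUnit ((x.den : ℤ)) := hsqf _ (by simpa [sq] using hdvdD)
  have hden1 : (x.den : ℤ) = 1 := by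
    rcases Int.isUnit_iff.mp hu with h1 | h1 <;> omega
  rw [hden1] at key
  exact ⟨x.num ^ 2, by linarith [key]⟩

set_option maxHeartbeats 2000000 in
theorem stmt_14 (D : ℕ) (hD : Squarefree D) (hD0 : 0 < D) (hD1 : D ≠ 1) (hD3 : D ≠ 3)
    (K : Type*) [Field K] [NumberField K]
    (θ : K) (hθ : θ ^ 2 = -(D : K)) (hdeg : Module.finrank ℚ K = 2)
    (d : ℕ) (hd0 : 0 < d) (hd1 : d ≠ 1) (hd3 : d ≠ 3) :
    (∀ η : (NumberField.RingOfIntegers K)ˣ,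
      ¬ ((d : NumberField.RingOfIntegers K) ∣
          ((η : NumberField.RingOfIntegers K) ^ 4 +
            (η : NumberField.RingOfIntegers K) ^ 2 + 1))) ∧
    ¬ ∃ α β : NumberField.RingOfIntegers K, α ≠ 0 ∧
        α ^ 2 + (α * β) ^ 2 + (α * β ^ 2) ^ 2 =
          (d : NumberField.RingOfIntegers K) * α * (α * β) * (α * β ^ 2) := by
  have hQinj : Function.Injective (algebraMap ℚ K) := (algebraMap ℚ K).injective
  have hDK : (D : K) = algebraMap ℚ K (D : ℚ) := by push_cast; ring
  -- θ is not rational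
  have hθQ : ∀ q : ℚ, algebraMap ℚ K q ≠ θ := by
    intro q hq
    have h2 : algebraMap ℚ K (q ^ 2) = algebraMap ℚ K (-(D : ℚ)) := by
      rw [map_pow, hq, hθ, map_neg, ← hDK]
    have h3 : (q : ℚ) ^ 2 = -(D : ℚ) := hQinj h2
    have hDpos : (0 : ℚ) < (D : ℚ) := by exact_mod_cast hD0
    nlinarith [sq_nonneg q]
  -- uniqueness of coordinates
  have huniq : ∀ a b : ℚ, algebraMap ℚ K a + algebraMap ℚ K b * θ = 0 → a = 0 ∧ b = 0 := by
    intro a b h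
    by_cases hb : b = 0
    · subst hb
      simp only [map_zero, zero_mul, add_zero] at h
      exact ⟨hQinj (by simpa using h), rfl⟩
    · exfalso
      apply hθQ (-a / b)
      have hbK : algebraMap ℚ K b ≠ 0 := fun h0 => hb (hQinj (by simpa using h0))
      have hbK' : algebraMap ℚ K b ≠ 0 := hbK
      rw [map_div₀, map_neg, div_eq_iff hbK']
      linear_combination -h
  -- existence of coordinates
  have hli : LinearIndependent ℚ ![(1 : K), θ] := by
    rw [LinearIndependent.pair_iff]
    intro s t hst
    have h' : algebraMap ℚ K s + algebraMap ℚ K t * θ = 0 := by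
      rw [Algebra.smul_def, Algebra.smul_def, mul_one] at hst
      exact hst
    exact huniq s t h'
  let B : Module.Basis (Fin 2) ℚ K :=
    basisOfLinearIndependentOfCardEqFinrank hli (by rw [hdeg]; simp)
  have hB : ∀ i, B i = ![(1 : K), θ] i := fun i => by
    rw [show (B : Fin 2 → K) = ![(1 : K), θ] from
      coe_basisOfLinearIndependentOfCardEqFinrank hli _]
  have hrep : ∀ x : K, ∃ a b : ℚ, x = algebraMap ℚ K a + algebraMap ℚ K b * θ := by
    intro x
    refine ⟨B.repr x 0, B.repr x 1, ?_⟩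
    have hsum := B.sum_repr x
    rw [Fin.sum_univ_two, hB 0, hB 1] at hsum
    simp only [Matrix.cons_val_zero, Matrix.cons_val_one, Matrix.head_cons] at hsum
    rw [Algebra.smul_def, Algebra.smul_def, mul_one] at hsum
    exact hsum.symm
  -- integrality gives integer trace and norm
  have hint : ∀ a b : ℚ, IsIntegral ℤ (algebraMap ℚ K a + algebraMap ℚ K b * θ) →
      (∃ m : ℤ, (m : ℚ) = 2 * a) ∧ (∃ n : ℤ, (n : ℚ) = a ^ 2 + D * b ^ 2) := by
    intro a b hI
    by_cases hb : b = 0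
    · subst hb
      rw [map_zero, zero_mul, add_zero] at hI
      rw [isIntegral_algebraMap_iff hQinj] at hI
      obtain ⟨k, hk⟩ := IsIntegrallyClosed.isIntegral_iff.mp hI
      have hk' : (k : ℚ) = a := by rw [← hk]; simp
      refine ⟨⟨2 * k, by push_cast [hk']; ring⟩, ⟨k ^ 2, by push_cast [hk']; ring⟩⟩
    · set x : K := algebraMap ℚ K a + algebraMap ℚ K b * θ with hxdef
      set q : ℚ[X] := X ^ 2 + C (-(2 * a)) * X + C (a ^ 2 + D * b ^ 2) with hqdef
      have hIQ : IsIntegral ℚ x := hI.tower_top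
      have hq0 : aeval x q = 0 := by
        rw [hqdef]
        simp only [map_add, map_mul, map_pow, map_neg, aeval_X, aeval_C, map_ofNat,
          map_natCast]
        rw [hxdef]
        linear_combination (algebraMap ℚ K b) ^ 2 * hθ
      have hmono : q.Monic := by
        rw [hqdef, add_assoc]
        exact (monic_X_pow 2).add_of_left (by
          apply lt_of_le_of_lt degree_linear_le
          rw [degree_X_pow]; norm_num)
      have hqdeg : q.natDegree = 2 := by
        rw [hqdef]; compute_degree!
      have hq_ne : q ≠ 0 := hmono.ne_zero
      have hpdvd : minpoly ℚ x ∣ q := minpoly.dvd ℚ x hq0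
      have hple : (minpoly ℚ x).natDegree ≤ 2 := hqdeg ▸ natDegree_le_of_dvd hpdvd hq_ne
      have hppos : 0 < (minpoly ℚ x).natDegree := minpoly.natDegree_pos hIQ
      have hpmonic : (minpoly ℚ x).Monic := minpoly.monic hIQ
      have hxnotQ : ∀ r : ℚ, x ≠ algebraMap ℚ K r := by
        intro r hr
        apply hθQ ((r - a) / b)
        have hbK : algebraMap ℚ K b ≠ 0 := fun h0 => hb (hQinj (by simpa using h0))
        rw [map_div₀, map_sub, div_eq_iff hbK]
        rw [hxdef] at hr
        linear_combination -hr
      have hpq : minpoly ℚ x = q := by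
        rcases Nat.lt_or_ge (minpoly ℚ x).natDegree 2 with hlt | hge
        · exfalso
          have h1 : (minpoly ℚ x).natDegree = 1 := by omega
          have hform := eq_X_add_C_of_natDegree_le_one (le_of_eq h1)
          have hlead : (minpoly ℚ x).coeff 1 = 1 := by
            have := hpmonic.leadingCoeff
            rwa [Polynomial.leadingCoeff, h1] at this
          rw [hlead, map_one, one_mul] at hform
          have haev := minpoly.aeval ℚ x
          rw [hform] at haev
          simp only [map_add, aeval_X, aeval_C] at haev
          apply hxnotQ (-(minpoly ℚ x).coeff 0)
          rw [map_neg]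
          linear_combination haev
        · -- degree 2: minpoly = q
          have h2 : (minpoly ℚ x).natDegree = 2 := le_antisymm hple hge
          obtain ⟨r, hr⟩ := hpdvd
          have hp_ne : minpoly ℚ x ≠ 0 := hpmonic.ne_zero
          have hr0 : r ≠ 0 := by rintro rfl; rw [mul_zero] at hr; exact hq_ne hr
          have hdeg_eq : q.natDegree = (minpoly ℚ x).natDegree + r.natDegree := by
            rw [hr, natDegree_mul hp_ne hr0]
          have hrdeg : r.natDegree = 0 := by omega
          have hrC : r = C (r.coeff 0) := eq_C_of_natDegree_eq_zero hrdeg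
          have hlc : r.coeff 0 = 1 := by
            have hm := hmono.leadingCoeff
            rw [hr, leadingCoeff_mul, hpmonic.leadingCoeff, one_mul] at hm
            rwa [hrC, leadingCoeff_C] at hm
          have hr1 : r = 1 := by rw [hrC, hlc, map_one]
          rw [hr, hr1, mul_one]
      have hint2 := minpoly.isIntegrallyClosed_eq_field_fractions' ℚ hI
      have hcoeff : ∀ i, q.coeff i = ((minpoly ℤ x).coeff i : ℚ) := by
        intro i
        rw [← hpq, hint2, coeff_map, eq_intCast]
      have hc1 : q.coeff 1 = -(2 * a) := by
        rw [hqdef]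
        simp only [coeff_add, coeff_C_mul, coeff_X_pow, coeff_X_one, coeff_C]
        norm_num
      have hc0 : q.coeff 0 = a ^ 2 + D * b ^ 2 := by
        rw [hqdef]
        simp only [coeff_add, coeff_C_mul, coeff_X_pow, coeff_X_zero, coeff_C]
        norm_num
      exact ⟨⟨-((minpoly ℤ x).coeff 1), by push_cast [← hcoeff 1, hc1]; ring⟩,
        ⟨(minpoly ℤ x).coeff 0, by rw [← hcoeff 0, hc0]⟩⟩
  -- units are ±1
  have hunit : ∀ η : (RingOfIntegers K)ˣ,
      ((η : RingOfIntegers K) : K) = 1 ∨ ((η : RingOfIntegers K) : K) = -1 := by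
    intro η
    obtain ⟨a, b, hab⟩ := hrep ((η : RingOfIntegers K) : K)
    obtain ⟨c, e, hce⟩ := hrep (((η⁻¹ : (RingOfIntegers K)ˣ) : RingOfIntegers K) : K)
    have hprod : ((η : RingOfIntegers K) : K) *
        (((η⁻¹ : (RingOfIntegers K)ˣ) : RingOfIntegers K) : K) = 1 := by
      have := η.mul_inv
      calc ((η : RingOfIntegers K) : K) * (((η⁻¹ : (RingOfIntegers K)ˣ) : RingOfIntegers K) : K)
          = ((((η : RingOfIntegers K) * ((η⁻¹ : (RingOfIntegers K)ˣ) : RingOfIntegers K)) : RingOfIntegers K) : K) := by push_cast; ring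
        _ = 1 := by rw [this]; push_cast; ring
    rw [hab, hce] at hprod
    have hkey : algebraMap ℚ K (a * c - D * b * e - 1) + algebraMap ℚ K (a * e + b * c) * θ = 0 := by
      simp only [map_sub, map_mul, map_add, map_one, map_natCast]
      linear_combination hprod - (algebraMap ℚ K b * algebraMap ℚ K e) * hθ
    obtain ⟨he1, he2⟩ := huniq _ _ hkey
    have hIη : IsIntegral ℤ (algebraMap ℚ K a + algebraMap ℚ K b * θ) := by
      rw [← hab]; exact RingOfIntegers.isIntegral_coe _
    have hIμ : IsIntegral ℤ (algebraMap ℚ K c + algebraMap ℚ K e * θ) := by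
      rw [← hce]; exact RingOfIntegers.isIntegral_coe _
    obtain ⟨⟨m, hm⟩, ⟨n, hn⟩⟩ := hint a b hIη
    obtain ⟨⟨m', hm'⟩, ⟨n', hn'⟩⟩ := hint c e hIμ
    -- Brahmagupta
    have hbrah : (a ^ 2 + D * b ^ 2) * (c ^ 2 + D * e ^ 2) = 1 := by
      have : (a ^ 2 + (D:ℚ) * b ^ 2) * (c ^ 2 + (D:ℚ) * e ^ 2)
          = (a * c - (D:ℚ) * b * e) ^ 2 + (D:ℚ) * (a * e + b * c) ^ 2 := by ring
      rw [this]
      have h1 : a * c - (D:ℚ) * b * e = 1 := by linarith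
      rw [h1, he2]
      ring
    have hnn' : (n : ℚ) * (n' : ℚ) = 1 := by rw [hn, hn']; exact hbrah
    have hnn'Z : n * n' = 1 := by exact_mod_cast hnn'
    have hDpos : (0 : ℚ) < (D : ℚ) := by exact_mod_cast hD0
    have hn_nonneg : (0 : ℚ) ≤ (n : ℚ) := by rw [hn]; positivity
    have hn1 : n = 1 := by
      rcases Int.isUnit_iff.mp (IsUnit.of_mul_eq_one n' hnn'Z) with h | h
      · exact h
      · exfalso; rw [h] at hn_nonneg; norm_num at hn_nonneg
    have hnorm1 : a ^ 2 + (D:ℚ) * b ^ 2 = 1 := by rw [← hn, hn1]; norm_num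
    by_cases hb : b = 0
    · -- a^2 = 1
      subst hb
      have ha2 : a ^ 2 = 1 := by linear_combination hnorm1
      have hacase : a = 1 ∨ a = -1 := by
        have h0 : (a - 1) * (a + 1) = 0 := by linear_combination ha2
        rcases mul_eq_zero.mp h0 with h | h
        · left; linarith
        · right; linarith
      rcases hacase with h | h
      · left; rw [hab, h]; simp
      · right; rw [hab, h]; simp
    · exfalso
      -- m^2 + 4 D b^2 = 4
      have hm4 : (m : ℚ) ^ 2 + (D:ℚ) * (2 * b) ^ 2 = 4 := by
        rw [hm]; nlinarith [hnorm1]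
      have hDbpos : (0:ℚ) < (D:ℚ) * (2 * b) ^ 2 := by positivity
      have hm2lt : m ^ 2 < 4 := by
        have : (m:ℚ)^2 < 4 := by linarith
        exact_mod_cast this
      have hb1 : -2 < m := by nlinarith [sq_nonneg (m + 2), sq_nonneg (m - 2)]
      have hb2 : m < 2 := by nlinarith [sq_nonneg (m + 2), sq_nonneg (m - 2)]
      have hmcases : m = -1 ∨ m = 0 ∨ m = 1 := by omega
      rcases hmcases with hm0 | hm0 | hm0
      · -- D*(2b)^2 = 3
        have h3 : (D : ℚ) * (2 * b) ^ 2 = ((3:ℕ) : ℚ) := by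
          rw [hm0] at hm4; push_cast at hm4 ⊢; linarith
        have := aux_sq_dvd D hD (2 * b) 3 h3
        have hdvd3 : D ∣ 3 := by exact_mod_cast this
        rcases Nat.prime_three.eq_one_or_self_of_dvd D hdvd3 with h | h
        · exact hD1 h
        · exact hD3 h
      · -- D*b^2 = 1
        have ha0 : a = 0 := by rw [hm0] at hm; push_cast at hm; linarith
        have h1 : (D : ℚ) * b ^ 2 = ((1:ℕ) : ℚ) := by
          rw [ha0] at hnorm1; push_cast; linarith
        have := aux_sq_dvd D hD b 1 h1
        have hdvd1 : D ∣ 1 := by exact_mod_cast this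
        exact hD1 (Nat.dvd_one.mp hdvd1)
      · have h3 : (D : ℚ) * (2 * b) ^ 2 = ((3:ℕ) : ℚ) := by
          rw [hm0] at hm4; push_cast at hm4 ⊢; linarith
        have := aux_sq_dvd D hD (2 * b) 3 h3
        have hdvd3 : D ∣ 3 := by exact_mod_cast this
        rcases Nat.prime_three.eq_one_or_self_of_dvd D hdvd3 with h | h
        · exact hD1 h
        · exact hD3 h
  -- d does not divide 3 in the ring of integers
  have hd_not_dvd_3 : ¬ ((d : RingOfIntegers K) ∣ (3 : RingOfIntegers K)) := by
    rintro ⟨γ, hγ⟩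
    obtain ⟨xq, yq, hxy⟩ := hrep ((γ : RingOfIntegers K) : K)
    have hK3 : (3 : K) = (d : K) * ((γ : RingOfIntegers K) : K) := by
      have h := congrArg (algebraMap (RingOfIntegers K) K) hγ
      rw [map_mul, map_natCast, map_ofNat] at h; exact h
    have hdK : (d : K) = algebraMap ℚ K (d : ℚ) := by push_cast; ring
    have hkey : algebraMap ℚ K ((d:ℚ) * xq - 3) + algebraMap ℚ K ((d:ℚ) * yq) * θ = 0 := by
      rw [map_sub, map_mul, map_mul]
      rw [hxy, hdK] at hK3
      have h3' : (3 : K) = algebraMap ℚ K (3 : ℚ) := (map_ofNat (algebraMap ℚ K) 3).symm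
      rw [h3'] at hK3
      linear_combination -hK3
    obtain ⟨he1, he2⟩ := huniq _ _ hkey
    have hy0 : yq = 0 := by
      have hd0' : (d : ℚ) ≠ 0 := by exact_mod_cast hd0.ne'
      rcases mul_eq_zero.mp he2 with h | h
      · exact absurd h hd0'
      · exact h
    have hγQ : ((γ : RingOfIntegers K) : K) = algebraMap ℚ K xq := by
      rw [hxy, hy0, map_zero, zero_mul, add_zero]
    have hIγ : IsIntegral ℤ (algebraMap ℚ K xq) := by
      rw [← hγQ]; exact RingOfIntegers.isIntegral_coe _
    rw [isIntegral_algebraMap_iff hQinj] at hIγ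
    obtain ⟨k, hk⟩ := IsIntegrallyClosed.isIntegral_iff.mp hIγ
    have hdk : (d : ℤ) * k = 3 := by
      have hk' : (k : ℚ) = xq := by rw [← hk]; simp
      have : (d : ℚ) * (k : ℚ) = 3 := by rw [hk']; linarith
      exact_mod_cast this
    have hdvd3 : (d : ℤ) ∣ 3 := ⟨k, hdk.symm⟩
    have : d ∣ 3 := by exact_mod_cast hdvd3
    rcases Nat.prime_three.eq_one_or_self_of_dvd d this with h | h
    · exact hd1 h
    · exact hd3 h
  have part1 : ∀ η : (RingOfIntegers K)ˣ,
      ¬ ((d : RingOfIntegers K) ∣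
          ((η : RingOfIntegers K) ^ 4 + (η : RingOfIntegers K) ^ 2 + 1)) := by
    intro η hdvd
    have hsq : ((η : RingOfIntegers K) : K) ^ 2 = 1 := by
      rcases hunit η with h | h <;> rw [h] <;> ring
    have hη2 : (η : RingOfIntegers K) ^ 2 = 1 := by
      have : (((η : RingOfIntegers K) ^ 2 : RingOfIntegers K) : K) = ((1 : RingOfIntegers K) : K) := by
        push_cast; rw [hsq]
      exact_mod_cast this
    have h3 : (η : RingOfIntegers K) ^ 4 + (η : RingOfIntegers K) ^ 2 + 1 = 3 := by
      have h4 : (η : RingOfIntegers K) ^ 4 = ((η : RingOfIntegers K) ^ 2) ^ 2 := by ring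
      rw [h4, hη2]; ring
    rw [h3] at hdvd
    exact hd_not_dvd_3 hdvd
  refine ⟨part1, ?_⟩
  rintro ⟨α, β, hα, heq⟩
  have hβ : β ≠ 0 := by
    rintro rfl
    simp only [mul_zero, ne_eq, zero_pow, mul_zero, add_zero] at heq
    have : α ^ 2 = 0 := by linear_combination heq
    exact hα (sq_eq_zero_iff.mp this)
  have key : 1 + β ^ 2 + β ^ 4 = (d : RingOfIntegers K) * α * β ^ 3 := by
    apply mul_left_cancel₀ (pow_ne_zero 2 hα)
    linear_combination heq
  have hβunit : β * ((d : RingOfIntegers K) * α * β ^ 2 - β ^ 3 - β) = 1 := by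
    linear_combination -key
  set u : (RingOfIntegers K)ˣ := Units.mkOfMulEqOne β _ hβunit with hu
  have hcoe : (u : RingOfIntegers K) = β := rfl
  apply part1 u
  rw [hcoe]
  exact ⟨α * β ^ 3, by linear_combination key⟩
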